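/- b_⋔ ≤ non(M), where b_⋔ is the least cardinality of a ⋔-unbounded family in 2^ω and non(M) is the least cardinality of a non-meager subset of 2^ω. -/

import Mathlib

open Filter Set Cardinal

/-- The interval partition of ℕ with |Iₙ| = 2^(n+1): Iₙ = [2^(n+1) - 2, 2^(n+2) - 2). -/
def intervalI (n : ℕ) : Set ℕ := Set.Ico (2 ^ (n + 1) - 2) (2 ^ (n + 2) - 2)

/-- f ⋔ g iff for all but finitely many k, f↾Iₖ ≠ g↾Iₖ. -/
def Fork (f g : ℕ → Bool) : Prop := ∀ᶠ k in atTop, ∃ j ∈ intervalI k, f j ≠ g j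

lemma intervalI_finite (n : ℕ) : (intervalI n).Finite := Set.finite_Ico _ _

lemma lt_intervalI_lower (i k : ℕ) (h : i + 1 ≤ k) : i < 2 ^ (k + 1) - 2 := by
  have h1 : i < 2 ^ i := Nat.lt_two_pow_self
  have h2 : 2 ^ (i + 2) = 4 * 2 ^ i := by ring
  have h3 : 2 ^ (i + 2) ≤ 2 ^ (k + 1) := Nat.pow_le_pow_right (by norm_num) (by omega)
  omega

/-- For each g and N, the set of f disagreeing with g on every Iₖ, k ≥ N, is nowhere dense. -/
lemma aux_nwd (g : ℕ → Bool) (N : ℕ) :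
    IsNowhereDense {f : ℕ → Bool | ∀ k, N ≤ k → ∃ j ∈ intervalI k, f j ≠ g j} := by
  classical
  set A := {f : ℕ → Bool | ∀ k, N ≤ k → ∃ j ∈ intervalI k, f j ≠ g j} with hA
  have hclosed : IsClosed A := by
    have : A = ⋂ k, {f : ℕ → Bool | N ≤ k → ∃ j ∈ intervalI k, f j ≠ g j} := by
      ext f; simp [hA, Set.mem_iInter]
    rw [this]
    refine isClosed_iInter fun k => ?_
    by_cases hk : N ≤ k
    · have : {f : ℕ → Bool | N ≤ k → ∃ j ∈ intervalI k, f j ≠ g j}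
          = (⋂ j ∈ intervalI k, {f : ℕ → Bool | f j = g j})ᶜ := by
        ext f; simp [hk]
      rw [this]
      refine isClosed_compl_iff.2 ((intervalI_finite k).isOpen_biInter fun j _ => ?_)
      exact IsOpen.preimage (continuous_apply (A := fun _ : ℕ => Bool) j) (isOpen_discrete ({g j} : Set Bool))
    · have : {f : ℕ → Bool | N ≤ k → ∃ j ∈ intervalI k, f j ≠ g j} = Set.univ := by
        ext f; simp [hk]
      rw [this]; exact isClosed_univ
  rw [hclosed.isNowhereDense_iff]
  rw [Set.eq_empty_iff_forall_notMem]
  intro f hf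
  obtain ⟨I, u, hIu, hsub⟩ := isOpen_pi_iff.1 isOpen_interior f hf
  set k := max N (I.sup id + 1) with hk
  set f' : ℕ → Bool := fun j => if j ∈ intervalI k then g j else f j with hf'
  have hf'mem : f' ∈ (↑I : Set ℕ).pi u := by
    intro i hi
    have hiI : i ∈ I := hi
    have : i < 2 ^ (k + 1) - 2 := by
      refine lt_intervalI_lower i k ?_
      have : i ≤ I.sup id := Finset.le_sup (f := id) hiI
      omega
    have hni : i ∉ intervalI k := by
      simp only [intervalI, Set.mem_Ico]; omega
    simp only [hf', hni, if_neg, ite_false]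
    exact (hIu i hiI).2
  have hf'A : f' ∈ A := interior_subset (hsub hf'mem)
  obtain ⟨j, hj, hne⟩ := hf'A k (le_max_left _ _)
  exact hne (by simp [hf', hj])

/-- The fork set {f | Fork f g} is meagre. -/
lemma fork_meagre (g : ℕ → Bool) : IsMeagre {f : ℕ → Bool | Fork f g} := by
  have hsub : {f : ℕ → Bool | Fork f g} ⊆
      ⋃ N, {f : ℕ → Bool | ∀ k, N ≤ k → ∃ j ∈ intervalI k, f j ≠ g j} := by
    intro f hf
    obtain ⟨N, hN⟩ := eventually_atTop.1 hf
    exact Set.mem_iUnion.2 ⟨N, hN⟩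
  refine (isMeagre_iUnion fun N => ?_).mono hsub
  rw [isMeagre_iff_countable_union_isNowhereDense]
  exact ⟨{_}, by simpa using aux_nwd g N, countable_singleton _, by simp⟩

/-- b_⋔ ≤ non(M) on Cantor space. -/
theorem stmt8 :
    sInf {c : Cardinal | ∃ F : Set (ℕ → Bool), #F = c ∧
        ∀ g : ℕ → Bool, ∃ f ∈ F, ¬ Fork f g} ≤
      sInf {c : Cardinal | ∃ S : Set (ℕ → Bool), #S = c ∧ ¬ IsMeagre S} := by
  refine le_csInf ⟨#(Set.univ : Set (ℕ → Bool)), Set.univ, rfl, ?_⟩ ?_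
  · intro h
    have : Dense (∅ : Set (ℕ → Bool)) := by
      have := dense_of_mem_residual (by simpa [IsMeagre, compl_univ] using h)
      simpa using this
    exact (Set.not_nonempty_empty) (this.nonempty)
  · rintro c ⟨S, hS, hSm⟩
    refine csInf_le' ⟨S, hS, fun g => ?_⟩
    by_contra h
    push_neg at h
    exact hSm ((fork_meagre g).mono fun f hf => h f hf)
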